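/- Let G be a locally compact group, E a Banach space, and Ψ: C_c(G) → L(E) a non-degenerate, locally bounded representation of the convolution algebra C_c(G) (i.e., for every compact K ⊆ G the restriction of Ψ to continuous functions supported in K is bounded with respect to the L¹-norm, and span Ψ(C_c(G))E is dense in E). Then there exists a unique norm-continuous representation μ: G → L(E) such that Ψ(f)x = ∫_G f(t) μ_t(x) dt for all f ∈ C_c(G) and x ∈ E. -/

import Mathlib

open Filter Topology MeasureTheory Set Function Pointwise BoundedContinuousFunction

section AuxTop
variable {G : Type*} [Group G] [TopologicalSpace G] [IsTopologicalGroup G]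

set_option linter.unusedSectionVars false

lemma aux_unif_left [LocallyCompactSpace G] (g : G → ℂ) (hg : Continuous g)
    (hgs : HasCompactSupport g) {ε : ℝ} (hε : 0 < ε) :
    ∃ U : Set G, IsOpen U ∧ (1:G) ∈ U ∧ ∀ u ∈ U, ∀ v, ‖g (u * v) - g v‖ ≤ ε := by
  obtain ⟨Q, hQc, hQn⟩ := exists_compact_mem_nhds (1:G)
  set K := tsupport g with hK
  have hKc : IsCompact K := hgs
  have hLc : IsCompact (Q⁻¹ * K ∪ K) := (hQc.inv.mul hKc).union hKc
  have hcont : Continuous fun p : G × G => ‖g (p.1 * p.2) - g p.2‖ :=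
    ((hg.comp (continuous_fst.mul continuous_snd)).sub (hg.comp continuous_snd)).norm
  have hopen : IsOpen {p : G × G | ‖g (p.1 * p.2) - g p.2‖ < ε} :=
    isOpen_lt hcont continuous_const
  have hsub : {(1:G)} ×ˢ (Q⁻¹ * K ∪ K) ⊆ {p : G × G | ‖g (p.1 * p.2) - g p.2‖ < ε} := by
    rintro ⟨u, v⟩ ⟨hu, -⟩
    rcases hu with rfl
    simpa using hε
  obtain ⟨U, Vs, hUo, _, hU1, hLV, hUV⟩ :=
    generalized_tube_lemma isCompact_singleton hLc hopen hsub
  refine ⟨U ∩ interior Q, hUo.inter isOpen_interior,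
    ⟨hU1 rfl, mem_interior_iff_mem_nhds.2 hQn⟩, ?_⟩
  rintro u ⟨huU, huQ⟩ v
  by_cases hv : v ∈ Q⁻¹ * K ∪ K
  · exact (hUV (Set.mk_mem_prod huU (hLV hv))).le
  · have h1 : g v = 0 := image_eq_zero_of_notMem_tsupport fun h => hv (Or.inr h)
    have h2 : g (u * v) = 0 := by
      refine image_eq_zero_of_notMem_tsupport fun h => hv (Or.inl ?_)
      exact ⟨u⁻¹, Set.inv_mem_inv.2 (interior_subset huQ), u * v, h, by group⟩
    simp [h1, h2, hε.le]

lemma aux_unif_right [LocallyCompactSpace G] (g : G → ℂ) (hg : Continuous g)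
    (hgs : HasCompactSupport g) {ε : ℝ} (hε : 0 < ε) :
    ∃ U : Set G, IsOpen U ∧ (1:G) ∈ U ∧ ∀ u ∈ U, ∀ v, ‖g (v * u) - g v‖ ≤ ε := by
  obtain ⟨Q, hQc, hQn⟩ := exists_compact_mem_nhds (1:G)
  set K := tsupport g with hK
  have hKc : IsCompact K := hgs
  have hLc : IsCompact (K * Q⁻¹ ∪ K) := (hKc.mul hQc.inv).union hKc
  have hcont : Continuous fun p : G × G => ‖g (p.2 * p.1) - g p.2‖ :=
    ((hg.comp (continuous_snd.mul continuous_fst)).sub (hg.comp continuous_snd)).norm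
  have hopen : IsOpen {p : G × G | ‖g (p.2 * p.1) - g p.2‖ < ε} :=
    isOpen_lt hcont continuous_const
  have hsub : {(1:G)} ×ˢ (K * Q⁻¹ ∪ K) ⊆ {p : G × G | ‖g (p.2 * p.1) - g p.2‖ < ε} := by
    rintro ⟨u, v⟩ ⟨hu, -⟩
    rcases hu with rfl
    simpa using hε
  obtain ⟨U, Vs, hUo, _, hU1, hLV, hUV⟩ :=
    generalized_tube_lemma isCompact_singleton hLc hopen hsub
  refine ⟨U ∩ interior Q, hUo.inter isOpen_interior,
    ⟨hU1 rfl, mem_interior_iff_mem_nhds.2 hQn⟩, ?_⟩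
  rintro u ⟨huU, huQ⟩ v
  by_cases hv : v ∈ K * Q⁻¹ ∪ K
  · exact (hUV (Set.mk_mem_prod huU (hLV hv))).le
  · have h1 : g v = 0 := image_eq_zero_of_notMem_tsupport fun h => hv (Or.inr h)
    have h2 : g (v * u) = 0 := by
      refine image_eq_zero_of_notMem_tsupport fun h => hv (Or.inl ?_)
      exact ⟨v * u, h, u⁻¹, Set.inv_mem_inv.2 (interior_subset huQ), by group⟩
    simp [h1, h2, hε.le]

end AuxTop

section AuxMeas
set_option linter.unusedSectionVars false
variable {G : Type*} [Group G] [TopologicalSpace G] [IsTopologicalGroup G]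
  [LocallyCompactSpace G] [MeasurableSpace G] [BorelSpace G]
  (μ : Measure G) [μ.IsHaarMeasure]

/-- Left translation. -/
def tr (t : G) (f : G → ℂ) : G → ℂ := fun s => f (t⁻¹ * s)

lemma tr_tr (s t : G) (f : G → ℂ) : tr s (tr t f) = tr (s * t) f := by
  funext u; simp [tr, mul_assoc]

lemma tr_one (f : G → ℂ) : tr 1 f = f := by funext u; simp [tr]

lemma tr_continuous (t : G) {f : G → ℂ} (hf : Continuous f) : Continuous (tr t f) :=
  hf.comp (continuous_const.mul continuous_id)

lemma support_tr (t : G) (f : G → ℂ) :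
    support (tr t f) = (fun x => t * x) '' support f := by
  ext s
  simp only [tr, mem_support, Set.mem_image]
  constructor
  · intro h; exact ⟨t⁻¹ * s, h, by group⟩
  · rintro ⟨x, hx, rfl⟩; simpa using hx

lemma tsupport_tr (t : G) (f : G → ℂ) :
    tsupport (tr t f) = (fun x => t * x) '' tsupport f := by
  rw [tsupport, support_tr]
  exact ((Homeomorph.mulLeft t).image_closure (support f)).symm

lemma tr_hcs (t : G) {f : G → ℂ} (hf : HasCompactSupport f) :
    HasCompactSupport (tr t f) := by
  rw [HasCompactSupport, tsupport_tr]
  exact hf.image (continuous_const.mul continuous_id)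

lemma tr_integral_norm (t : G) (f : G → ℂ) :
    ∫ s, ‖tr t f s‖ ∂μ = ∫ s, ‖f s‖ ∂μ :=
  integral_mul_left_eq_self (fun s => ‖f s‖) t⁻¹

/-- L¹ bound for compactly supported functions. -/
lemma aux_L1_bound {h : G → ℂ} {K : Set G} {b : ℝ} (hh : Continuous h)
    (hK : IsCompact K) (hsupp : tsupport h ⊆ K) (hb : ∀ s, ‖h s‖ ≤ b) :
    ∫ s, ‖h s‖ ∂μ ≤ b * (μ K).toReal := by
  have h0 : ∀ x, x ∉ K → ‖h x‖ = 0 := fun x hx => by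
    rw [image_eq_zero_of_notMem_tsupport fun hc => hx (hsupp hc), norm_zero]
  rw [← setIntegral_eq_integral_of_forall_compl_eq_zero h0]
  have hnn : 0 ≤ ∫ s in K, ‖h s‖ ∂μ :=
    setIntegral_nonneg_of_ae_restrict (Eventually.of_forall fun s => norm_nonneg _)
  calc ∫ s in K, ‖h s‖ ∂μ = ‖∫ s in K, ‖h s‖ ∂μ‖ := (Real.norm_of_nonneg hnn).symm
    _ ≤ b * (μ K).toReal := by
        apply norm_setIntegral_le_of_norm_le_const hK.measure_lt_top
        intro x _
        rw [Real.norm_of_nonneg (norm_nonneg _)]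
        exact hb x

/-- Approximate identity. -/
lemma aux_approx_id {V : Set G} (hV : IsOpen V) (h1V : (1:G) ∈ V) :
    ∃ e : G → ℝ, Continuous e ∧ HasCompactSupport e ∧ tsupport e ⊆ V ∧
      (∀ s, 0 ≤ e s) ∧ ∫ s, e s ∂μ = 1 := by
  obtain ⟨k, hkc, hkcl, h1k, hkV⟩ :=
    exists_compact_closed_between (isCompact_singleton (x := (1:G))) hV
      (by simpa using h1V)
  obtain ⟨f, hf1, hf0, hfc, hfI⟩ :=
    exists_continuous_one_zero_of_isCompact (isCompact_singleton (x := (1:G)))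
      (isOpen_interior (s := k)).isClosed_compl
      (disjoint_compl_right_iff_subset.mpr h1k)
  have hts : tsupport f ⊆ k := by
    have : support f ⊆ interior k := by
      intro x hx
      by_contra hc
      exact hx (hf0 hc)
    calc tsupport f ⊆ closure (interior k) := closure_mono this
      _ ⊆ k := (closure_mono interior_subset).trans hkcl.closure_eq.subset
  have hpos : 0 < ∫ s, f s ∂μ := by
    refine integral_pos_of_integrable_nonneg_nonzero (x := (1:G)) f.continuous
      (f.continuous.integrable_of_hasCompactSupport hfc) (fun x => (hfI x).1) ?_
    show f 1 ≠ 0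
    rw [show f 1 = 1 from hf1 rfl]; norm_num
  have hss : support (fun s => (∫ u, f u ∂μ)⁻¹ * f s) ⊆ support f := by
    intro x hx h0
    exact hx (by simp [mem_support, h0])
  refine ⟨fun s => (∫ u, f u ∂μ)⁻¹ * f s, continuous_const.mul f.continuous, ?_, ?_, ?_, ?_⟩
  · exact HasCompactSupport.mono hfc hss
  · exact (closure_mono hss).trans (hts.trans hkV)
  · intro s; exact mul_nonneg (inv_nonneg.2 hpos.le) (hfI s).1
  · rw [integral_const_mul]
    exact inv_mul_cancel₀ hpos.ne'

/-- Convolution. -/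
noncomputable def cv (f g : G → ℂ) : G → ℂ := fun u => ∫ s, f s * g (s⁻¹ * u) ∂μ

lemma cv_integrand_integrable {f g : G → ℂ} (hf : Continuous f) (hfc : HasCompactSupport f)
    (hg : Continuous g) (u : G) :
    Integrable (fun s => f s * g (s⁻¹ * u)) μ := by
  have hc : Continuous fun s : G => f s * g (s⁻¹ * u) :=
    hf.mul (hg.comp ((continuous_id.inv).mul continuous_const))
  refine hc.integrable_of_hasCompactSupport (hfc.mono ?_)
  intro s hs h0
  exact hs (by simp [mem_support, h0])

lemma support_cv {f g : G → ℂ} : support (cv μ f g) ⊆ support f * support g := by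
  intro u hu
  rw [mem_support] at hu
  have hex : ∃ s, f s * g (s⁻¹ * u) ≠ 0 := by
    by_contra hc
    push_neg at hc
    exact hu (by simp only [cv]; simp [hc])
  obtain ⟨s, hs⟩ := hex
  have hf : f s ≠ 0 := fun h => hs (by simp [h])
  have hg : g (s⁻¹ * u) ≠ 0 := fun h => hs (by simp [h])
  exact ⟨s, hf, s⁻¹ * u, hg, by group⟩

lemma cv_hcs {f g : G → ℂ} (hfc : HasCompactSupport f) (hgc : HasCompactSupport g) :
    HasCompactSupport (cv μ f g) := by
  apply HasCompactSupport.of_support_subset_isCompact (hfc.mul hgc)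
  exact (support_cv μ).trans (Set.mul_subset_mul (subset_tsupport f) (subset_tsupport g))

lemma tr_cv (t : G) (f g : G → ℂ) : cv μ (tr t f) g = tr t (cv μ f g) := by
  funext u
  show (∫ s, f (t⁻¹ * s) * g (s⁻¹ * u) ∂μ) = cv μ f g (t⁻¹ * u)
  calc (∫ s, f (t⁻¹ * s) * g (s⁻¹ * u) ∂μ)
      = ∫ s, f (t⁻¹ * (t * s)) * g ((t * s)⁻¹ * u) ∂μ :=
        (integral_mul_left_eq_self (fun s => f (t⁻¹ * s) * g (s⁻¹ * u)) t).symm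
    _ = ∫ s, f s * g (s⁻¹ * (t⁻¹ * u)) ∂μ := by
        congr 1; funext s
        rw [inv_mul_cancel_left, mul_inv_rev, mul_assoc]
    _ = cv μ f g (t⁻¹ * u) := rfl

lemma cv_continuous {f g : G → ℂ} (hf : Continuous f) (hfc : HasCompactSupport f)
    (hg : Continuous g) (hgc : HasCompactSupport g) : Continuous (cv μ f g) := by
  rw [continuous_iff_continuousAt]
  intro u₀
  rw [ContinuousAt, Metric.tendsto_nhds]
  intro ε hε
  set If : ℝ := ∫ s, ‖f s‖ ∂μ with hIf
  have hIf0 : 0 ≤ If := integral_nonneg fun s => norm_nonneg _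
  set ε' : ℝ := ε / (2 * (If + 1)) with hε'
  have hε'0 : 0 < ε' := by positivity
  obtain ⟨U, hUo, hU1, hU⟩ := aux_unif_right g hg hgc hε'0
  have hev : ∀ᶠ u in 𝓝 u₀, u₀⁻¹ * u ∈ U := by
    have : Continuous fun u : G => u₀⁻¹ * u := continuous_const.mul continuous_id
    exact this.continuousAt.preimage_mem_nhds (hUo.mem_nhds (by simpa using hU1))
  filter_upwards [hev] with u huU
  have key : ∀ s, ‖f s * g (s⁻¹ * u) - f s * g (s⁻¹ * u₀)‖ ≤ ‖f s‖ * ε' := by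
    intro s
    rw [← mul_sub, norm_mul]
    refine mul_le_mul_of_nonneg_left ?_ (norm_nonneg _)
    have := hU _ huU (s⁻¹ * u₀)
    simpa [mul_assoc] using this
  have hint1 := cv_integrand_integrable μ hf hfc hg u
  have hint0 := cv_integrand_integrable μ hf hfc hg u₀
  have hd : dist (cv μ f g u) (cv μ f g u₀)
      = ‖∫ s, (f s * g (s⁻¹ * u) - f s * g (s⁻¹ * u₀)) ∂μ‖ := by
    rw [dist_eq_norm, show cv μ f g u - cv μ f g u₀
      = ∫ s, (f s * g (s⁻¹ * u) - f s * g (s⁻¹ * u₀)) ∂μ from (integral_sub hint1 hint0).symm]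
  rw [hd]
  calc ‖∫ s, (f s * g (s⁻¹ * u) - f s * g (s⁻¹ * u₀)) ∂μ‖
      ≤ ∫ s, ‖f s * g (s⁻¹ * u) - f s * g (s⁻¹ * u₀)‖ ∂μ := norm_integral_le_integral_norm _
    _ ≤ ∫ s, ‖f s‖ * ε' ∂μ := by
        refine integral_mono (hint1.sub hint0).norm ?_ key
        exact (hf.norm.integrable_of_hasCompactSupport hfc.norm).mul_const ε'
    _ = If * ε' := by rw [integral_mul_const]
    _ ≤ (If + 1) * ε' := by nlinarith
    _ = ε / 2 := by rw [hε']; field_simp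
    _ < ε := by linarith

/-- Approximate identity estimate. -/
lemma aux_cv_approx {e : G → ℝ} (he : Continuous e) (hec : HasCompactSupport e)
    (hnn : ∀ s, 0 ≤ e s) (heI : ∫ s, e s ∂μ = 1)
    {g : G → ℂ} (hg : Continuous g) {ε : ℝ}
    (hb : ∀ s ∈ support e, ∀ v, ‖g (s⁻¹ * v) - g v‖ ≤ ε) (u : G) :
    ‖cv μ (fun s => (e s : ℂ)) g u - g u‖ ≤ ε := by
  have heC : Continuous fun s : G => (e s : ℂ) := Complex.continuous_ofReal.comp he
  have heCc : HasCompactSupport fun s : G => (e s : ℂ) :=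
    hec.comp_left (g := Complex.ofReal) Complex.ofReal_zero
  have h1 : cv μ (fun s => (e s : ℂ)) g u - g u
      = ∫ s, (e s : ℂ) * (g (s⁻¹ * u) - g u) ∂μ := by
    have hi1 := cv_integrand_integrable μ heC heCc hg u
    have hi2 : Integrable (fun s : G => (e s : ℂ) * g u) μ :=
      (heC.integrable_of_hasCompactSupport heCc).mul_const _
    rw [show (fun s : G => (e s : ℂ) * (g (s⁻¹ * u) - g u))
      = fun s : G => (e s : ℂ) * g (s⁻¹ * u) - (e s : ℂ) * g u from funext fun s => by ring,
      integral_sub hi1 hi2, integral_mul_const,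
      show (∫ s, (e s : ℂ) ∂μ) = ((∫ s, e s ∂μ : ℝ) : ℂ) from integral_ofReal, heI]
    simp [cv]
  rw [h1]
  have key : ∀ s, ‖(e s : ℂ) * (g (s⁻¹ * u) - g u)‖ ≤ e s * ε := by
    intro s
    by_cases hs : e s = 0
    · simp [hs]
    · rw [norm_mul, Complex.norm_real, Real.norm_of_nonneg (hnn s)]
      exact mul_le_mul_of_nonneg_left (hb s hs u) (hnn s)
  calc ‖∫ s, (e s : ℂ) * (g (s⁻¹ * u) - g u) ∂μ‖
      ≤ ∫ s, ‖(e s : ℂ) * (g (s⁻¹ * u) - g u)‖ ∂μ := norm_integral_le_integral_norm _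
    _ ≤ ∫ s, e s * ε ∂μ := by
        refine integral_mono ?_ ((he.integrable_of_hasCompactSupport hec).mul_const ε) key
        have hc : Continuous fun s : G => (e s : ℂ) * (g (s⁻¹ * u) - g u) :=
          heC.mul ((hg.comp ((continuous_id.inv).mul continuous_const)).sub continuous_const)
        refine (hc.integrable_of_hasCompactSupport ?_).norm
        refine heCc.mono ?_
        intro s hs h0
        exact hs (by simp [mem_support, h0])
    _ = ε := by rw [integral_mul_const, heI, one_mul]

end AuxMeas

set_option maxHeartbeats 2000000

/-- Every non-degenerate locally bounded representation `Ψ` of the convolution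
algebra `C_c(G)` on a Banach space `E` comes from a unique norm-continuous representation
`μ : G → L(E)` via `Ψ(f)x = ∫ f(t) μ_t(x) dt`. -/
theorem stmt5 {G E : Type*} [Group G] [TopologicalSpace G] [IsTopologicalGroup G]
    [LocallyCompactSpace G] [MeasurableSpace G] [BorelSpace G]
    (μ : Measure G) [μ.IsHaarMeasure]
    [NormedAddCommGroup E] [NormedSpace ℂ E] [CompleteSpace E]
    (Ψ : (G → ℂ) → (E →L[ℂ] E))
    (hadd : ∀ f g : G → ℂ, Continuous f → HasCompactSupport f →
      Continuous g → HasCompactSupport g → Ψ (f + g) = Ψ f + Ψ g)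
    (hsmul : ∀ (c : ℂ) (f : G → ℂ), Continuous f → HasCompactSupport f →
      Ψ (c • f) = c • Ψ f)
    (hmul : ∀ f g : G → ℂ, Continuous f → HasCompactSupport f →
      Continuous g → HasCompactSupport g →
      Ψ (fun t => ∫ s, f s * g (s⁻¹ * t) ∂μ) = (Ψ f).comp (Ψ g))
    (hlb : ∀ K : Set G, IsCompact K → ∃ C : ℝ, ∀ f : G → ℂ, Continuous f →
      tsupport f ⊆ K → ‖Ψ f‖ ≤ C * ∫ t, ‖f t‖ ∂μ)
    (hnd : Dense ((Submodule.span ℂ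
      {y : E | ∃ (f : G → ℂ) (x : E), Continuous f ∧ HasCompactSupport f ∧ y = Ψ f x}
        : Submodule ℂ E) : Set E)) :
    ∃! π : G → (E →L[ℂ] E),
      (∀ s t : G, π (s * t) = (π s).comp (π t)) ∧ π 1 = 1 ∧
      (∀ x : E, Continuous fun t => π t x) ∧
      (∀ f : G → ℂ, Continuous f → HasCompactSupport f →
        ∀ x : E, Ψ f x = ∫ t, f t • π t x ∂μ) := by
  classical
  haveI : Nonempty E := ⟨0⟩
  set S : Set E := {y : E | ∃ (f : G → ℂ) (x : E),
    Continuous f ∧ HasCompactSupport f ∧ y = Ψ f x} with hS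
  set D : Submodule ℂ E := Submodule.span ℂ S with hD
  -- basic algebra facts about Ψ
  have hcs0 : HasCompactSupport (0 : G → ℂ) := by
    simp [HasCompactSupport, tsupport]
  have hΨ0 : Ψ 0 = 0 := by
    have h := hsmul 0 0 continuous_const hcs0
    simpa using h
  have hΨsub : ∀ f g : G → ℂ, Continuous f → HasCompactSupport f →
      Continuous g → HasCompactSupport g → Ψ (f - g) = Ψ f - Ψ g := by
    intro f g hf hfc hg hgc
    have hfgc : HasCompactSupport (f - g) := by
      rw [sub_eq_add_neg]; exact hfc.add hgc.neg
    have h1 : Ψ ((f - g) + g) = Ψ (f - g) + Ψ g :=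
      hadd (f - g) g (hf.sub hg) hfgc hg hgc
    rw [sub_add_cancel] at h1
    rw [eq_sub_iff_add_eq, ← h1]
  -- fixed compact neighborhood of 1
  obtain ⟨V₀, hV₀c, hV₀n⟩ := exists_compact_mem_nhds (1:G)
  -- the filter of small open neighborhoods of 1
  let ι : Type _ := {V : Set G // IsOpen V ∧ (1:G) ∈ V}
  let F : Filter ι := Filter.comap (fun V : ι => (V : Set G)) ((𝓝 (1:G)).smallSets)
  have hFmem : ∀ {W : Set G}, W ∈ 𝓝 (1:G) → {t : Set G | t ⊆ W} ∈ (𝓝 (1:G)).smallSets := by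
    intro W hW
    rw [((𝓝 (1:G)).basis_sets.smallSets).mem_iff]
    exact ⟨W, hW, fun t ht => ht⟩
  have hFne : F.NeBot := by
    apply Filter.comap_neBot
    intro t ht
    rw [((𝓝 (1:G)).basis_sets.smallSets).mem_iff] at ht
    obtain ⟨W, hW, hsub⟩ := ht
    exact ⟨⟨interior W, isOpen_interior, mem_interior_iff_mem_nhds.2 hW⟩,
      hsub (fun x hx => interior_subset hx)⟩
  have hFev : ∀ {W : Set G}, W ∈ 𝓝 (1:G) → ∀ᶠ V : ι in F, (V : Set G) ⊆ W := by
    intro W hW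
    exact Filter.preimage_mem_comap (hFmem hW)
  -- approximate identity
  have hexe : ∀ V : ι, ∃ e : G → ℝ, Continuous e ∧ HasCompactSupport e ∧
      tsupport e ⊆ (V : Set G) ∧ (∀ s, 0 ≤ e s) ∧ ∫ s, e s ∂μ = 1 :=
    fun V => aux_approx_id μ V.2.1 V.2.2
  choose er her1 her2 her3 her4 her5 using hexe
  let e : ι → G → ℂ := fun V s => ((er V s : ℝ) : ℂ)
  have he1 : ∀ V, Continuous (e V) := fun V => Complex.continuous_ofReal.comp (her1 V)
  have he2 : ∀ V, HasCompactSupport (e V) :=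
    fun V => (her2 V).comp_left (g := Complex.ofReal) Complex.ofReal_zero
  have he3 : ∀ V, tsupport (e V) ⊆ (V : Set G) := by
    intro V
    refine subset_trans (closure_mono ?_) (her3 V)
    intro s hs h0
    exact hs (by simp [e, mem_support, h0])
  have he5 : ∀ V, ∫ s, ‖e V s‖ ∂μ = 1 := by
    intro V
    have : ∀ s, ‖e V s‖ = er V s := fun s => by
      rw [show e V s = ((er V s : ℝ) : ℂ) from rfl, Complex.norm_real,
        Real.norm_of_nonneg (her4 V s)]
    simp only [this]
    exact her5 V
  -- the key limit
  have hKL : ∀ (t : G) (f : G → ℂ), Continuous f → HasCompactSupport f → ∀ x : E,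
      Tendsto (fun V : ι => Ψ (tr t (e V)) (Ψ f x)) F (𝓝 (Ψ (tr t f) x)) := by
    intro t f hf hfc x
    have heq : ∀ V : ι, Ψ (tr t (e V)) (Ψ f x) = Ψ (tr t (cv μ (e V) f)) x := by
      intro V
      have h2 : Ψ (cv μ (tr t (e V)) f) = (Ψ (tr t (e V))).comp (Ψ f) :=
        hmul (tr t (e V)) f (tr_continuous t (he1 V)) (tr_hcs t (he2 V)) hf hfc
      rw [tr_cv] at h2
      exact (DFunLike.congr_fun h2 x).symm
    simp only [heq]
    set K₁ : Set G := closure ((V₀ : Set G) * tsupport f ∪ tsupport f) with hK₁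
    have hK₁c : IsCompact K₁ := ((hV₀c.mul hfc).union hfc).closure
    obtain ⟨C, hC⟩ := hlb ((fun x => t * x) '' K₁)
      (hK₁c.image (continuous_const.mul continuous_id))
    rw [Metric.tendsto_nhds]
    intro ε hε
    set B : ℝ := max C 0 * (μ K₁).toReal * ‖x‖ with hB
    have hB0 : 0 ≤ B := by positivity
    set ε' : ℝ := ε / (2 * (B + 1)) with hε'
    have hε'0 : 0 < ε' := by positivity
    obtain ⟨U, hUo, hU1, hU⟩ := aux_unif_left f hf hfc hε'0
    have hUinv : U⁻¹ ∈ 𝓝 (1:G) := hUo.inv.mem_nhds (by simpa using hU1)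
    filter_upwards [hFev hV₀n, hFev hUinv] with V hVV₀ hVU
    have happrox : ∀ u, ‖cv μ (e V) f u - f u‖ ≤ ε' := by
      intro u
      refine aux_cv_approx μ (her1 V) (her2 V) (her4 V) (her5 V) hf ?_ u
      intro s hs v
      have hsU : s⁻¹ ∈ U := by
        have : s ∈ U⁻¹ := hVU (her3 V (subset_tsupport _ hs))
        simpa [Set.mem_inv] using this
      exact hU s⁻¹ hsU v
    have hcvc : Continuous (cv μ (e V) f) := cv_continuous μ (he1 V) (he2 V) hf hfc
    have hsupp : tsupport (cv μ (e V) f - f) ⊆ K₁ := by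
      refine subset_trans (closure_mono ?_) (by rw [hK₁])
      refine subset_trans (Function.support_sub _ _) ?_
      apply Set.union_subset_union
      · refine subset_trans (support_cv μ) ?_
        refine subset_trans (Set.mul_subset_mul ?_ (subset_tsupport f)) subset_rfl
        exact fun s hs => hVV₀ (he3 V (subset_tsupport _ hs))
      · exact subset_tsupport f
    have hL1 : ∫ s, ‖(cv μ (e V) f - f) s‖ ∂μ ≤ ε' * (μ K₁).toReal := by
      refine aux_L1_bound μ (hcvc.sub hf) hK₁c hsupp ?_
      intro s
      exact happrox s
    have htreq : tr t (cv μ (e V) f) - tr t f = tr t (cv μ (e V) f - f) := rfl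
    have hdiff : Ψ (tr t (cv μ (e V) f)) x - Ψ (tr t f) x
        = Ψ (tr t (cv μ (e V) f - f)) x := by
      have hsub2 := hΨsub (tr t (cv μ (e V) f)) (tr t f) (tr_continuous t hcvc)
          (tr_hcs t (cv_hcs μ (he2 V) hfc)) (tr_continuous t hf) (tr_hcs t hfc)
      rw [htreq] at hsub2
      rw [hsub2]
      rfl
    rw [dist_eq_norm, hdiff]
    have htsub : tsupport (tr t (cv μ (e V) f - f)) ⊆ (fun x => t * x) '' K₁ := by
      rw [tsupport_tr]
      exact Set.image_mono hsupp
    have hcont2 : Continuous (tr t (cv μ (e V) f - f)) := tr_continuous t (hcvc.sub hf)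
    calc ‖Ψ (tr t (cv μ (e V) f - f)) x‖
        ≤ ‖Ψ (tr t (cv μ (e V) f - f))‖ * ‖x‖ := ContinuousLinearMap.le_opNorm _ _
      _ ≤ (max C 0 * (ε' * (μ K₁).toReal)) * ‖x‖ := by
          refine mul_le_mul_of_nonneg_right ?_ (norm_nonneg _)
          refine le_trans (hC _ hcont2 htsub) ?_
          rw [tr_integral_norm]
          refine le_trans (mul_le_mul_of_nonneg_right (le_max_left C 0) ?_) ?_
          · exact integral_nonneg fun s => norm_nonneg _
          · exact mul_le_mul_of_nonneg_left hL1 (le_max_right C 0)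
      _ = B * ε' := by rw [hB]; ring
      _ ≤ (B + 1) * ε' := by nlinarith
      _ = ε / 2 := by rw [hε']; field_simp
      _ < ε := by linarith
  -- definition of the limit operator on D
  have hDlim : ∀ (t : G), ∀ y ∈ D, ∃ z : E,
      Tendsto (fun V : ι => Ψ (tr t (e V)) y) F (𝓝 z) := by
    intro t y hy
    induction hy using Submodule.span_induction with
    | mem y hy =>
        obtain ⟨f, x, hf, hfc, rfl⟩ := hy
        exact ⟨_, hKL t f hf hfc x⟩
    | zero => exact ⟨0, by simpa using tendsto_const_nhds⟩
    | add y z _ _ ihy ihz =>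
        obtain ⟨a, ha⟩ := ihy; obtain ⟨b, hb⟩ := ihz
        exact ⟨a + b, by simpa using ha.add hb⟩
    | smul c y _ ihy =>
        obtain ⟨a, ha⟩ := ihy
        exact ⟨c • a, by simpa using ha.const_smul c⟩
  let q : G → E → E := fun t y => limUnder F (fun V : ι => Ψ (tr t (e V)) y)
  have hq : ∀ (t : G), ∀ y ∈ D, Tendsto (fun V : ι => Ψ (tr t (e V)) y) F (𝓝 (q t y)) := by
    intro t y hy
    obtain ⟨z, hz⟩ := hDlim t y hy
    rwa [show q t y = z from hz.limUnder_eq]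
  -- uniform local bounds
  have hqbound : ∀ (N : Set G), IsCompact N → ∃ C : ℝ, 0 ≤ C ∧
      ∀ t ∈ N, ∀ y ∈ D, ‖q t y‖ ≤ C * ‖y‖ := by
    intro N hN
    obtain ⟨C, hC⟩ := hlb (closure (N * V₀)) (hN.mul hV₀c).closure
    refine ⟨max C 0, le_max_right _ _, ?_⟩
    intro t ht y hy
    refine le_of_tendsto (hq t y hy).norm ?_
    filter_upwards [hFev hV₀n] with V hV
    have hts : tsupport (tr t (e V)) ⊆ closure (N * V₀) := by
      rw [tsupport_tr]
      refine subset_trans ?_ subset_closure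
      rintro - ⟨s, hs, rfl⟩
      exact ⟨t, ht, s, hV (he3 V hs), rfl⟩
    calc ‖Ψ (tr t (e V)) y‖ ≤ ‖Ψ (tr t (e V))‖ * ‖y‖ := (Ψ (tr t (e V))).le_opNorm y
      _ ≤ max C 0 * ‖y‖ := by
          refine mul_le_mul_of_nonneg_right ?_ (norm_nonneg _)
          refine le_trans (hC _ (tr_continuous t (he1 V)) hts) ?_
          rw [tr_integral_norm, he5 V, mul_one]
          exact le_max_left _ _
  -- linearity of q on D
  have hqadd : ∀ (t : G), ∀ y ∈ D, ∀ z ∈ D, q t (y + z) = q t y + q t z := by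
    intro t y hy z hz
    refine tendsto_nhds_unique (hq t (y + z) (D.add_mem hy hz)) ?_
    simpa using (hq t y hy).add (hq t z hz)
  have hqsmul : ∀ (t : G) (c : ℂ), ∀ y ∈ D, q t (c • y) = c • q t y := by
    intro t c y hy
    refine tendsto_nhds_unique (hq t (c • y) (D.smul_mem c hy)) ?_
    simpa using (hq t y hy).const_smul c
  -- the operators
  have hCt : ∀ t : G, ∃ C : ℝ, 0 ≤ C ∧ ∀ y ∈ D, ‖q t y‖ ≤ C * ‖y‖ := by
    intro t
    obtain ⟨C, h0, hC⟩ := hqbound {t} isCompact_singleton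
    exact ⟨C, h0, hC t rfl⟩
  let pD : G → (↥D →L[ℂ] E) := fun t =>
    LinearMap.mkContinuous
      { toFun := fun y => q t (y : E)
        map_add' := fun y z => hqadd t y y.2 z z.2
        map_smul' := fun c y => hqsmul t c y y.2 }
      (Classical.choose (hCt t))
      (fun y => (Classical.choose_spec (hCt t)).2 y y.2)
  have hdr : DenseRange ((D.subtypeL : ↥D →L[ℂ] E) : ↥D → E) := by
    have : Set.range ((D.subtypeL : ↥D →L[ℂ] E) : ↥D → E) = (D : Set E) := Subtype.range_coe
    rw [DenseRange, this]
    exact hnd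
  have hui : IsUniformInducing ((D.subtypeL : ↥D →L[ℂ] E) : ↥D → E) :=
    isUniformEmbedding_subtype_val.isUniformInducing
  let π : G → (E →L[ℂ] E) := fun t => (pD t).extend D.subtypeL
  have hπD : ∀ (t : G), ∀ y (hy : y ∈ D), π t y = q t y := by
    intro t y hy
    have h := ContinuousLinearMap.extend_eq (pD t) hdr hui ⟨y, hy⟩
    exact h
  have hπval : ∀ (t : G) (f : G → ℂ) (hf : Continuous f) (hfc : HasCompactSupport f) (x : E),
      π t (Ψ f x) = Ψ (tr t f) x := by
    intro t f hf hfc x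
    have hy : Ψ f x ∈ D := Submodule.subset_span ⟨f, x, hf, hfc, rfl⟩
    rw [hπD t _ hy]
    exact tendsto_nhds_unique (hq t _ hy) (hKL t f hf hfc x)
  have hπbound : ∀ (N : Set G), IsCompact N → ∃ C : ℝ, 0 ≤ C ∧
      ∀ t ∈ N, ∀ x : E, ‖π t x‖ ≤ C * ‖x‖ := by
    intro N hN
    obtain ⟨C, hC0, hC⟩ := hqbound N hN
    refine ⟨C, hC0, fun t ht x => ?_⟩
    have hsub : (D : Set E) ⊆ {x : E | ‖π t x‖ ≤ C * ‖x‖} := by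
      intro y hy
      rw [Set.mem_setOf_eq, hπD t y hy]
      exact hC t ht y hy
    have hcl : closure (D : Set E) ⊆ {x : E | ‖π t x‖ ≤ C * ‖x‖} :=
      closure_minimal hsub (isClosed_le ((π t).continuous.norm)
        (continuous_const.mul continuous_norm))
    exact hcl (by rw [hnd.closure_eq]; trivial)
  have hnd' : Dense ((Submodule.span ℂ S : Submodule ℂ E) : Set E) := by
    rw [← hD]; exact hnd
  -- multiplicativity and identity
  have hπmul : ∀ s t : G, π (s * t) = (π s).comp (π t) := by
    intro s t
    refine ContinuousLinearMap.ext_on hnd' ?_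
    rintro y ⟨f, x, hfco, hfc, rfl⟩
    show π (s * t) (Ψ f x) = π s (π t (Ψ f x))
    rw [hπval (s * t) f hfco hfc x, hπval t f hfco hfc x,
      hπval s (tr t f) (tr_continuous t hfco) (tr_hcs t hfc) x, tr_tr]
  have hπone : π 1 = 1 := by
    refine ContinuousLinearMap.ext_on hnd' ?_
    rintro y ⟨f, x, hfco, hfc, rfl⟩
    show π 1 (Ψ f x) = Ψ f x
    rw [hπval 1 f hfco hfc x, tr_one]
  -- continuity on generators
  have hgen : ∀ (f : G → ℂ), Continuous f → HasCompactSupport f → ∀ x : E,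
      Continuous fun t : G => Ψ (tr t f) x := by
    intro f hf hfc x
    rw [continuous_iff_continuousAt]
    intro t₀
    rw [ContinuousAt, Metric.tendsto_nhds]
    intro ε hε
    obtain ⟨Q, hQc, hQn⟩ := exists_compact_mem_nhds t₀
    set K₂ : Set G := closure (Q * tsupport f) with hK₂
    have hK₂c : IsCompact K₂ := (hQc.mul hfc).closure
    obtain ⟨C, hC⟩ := hlb K₂ hK₂c
    set B : ℝ := max C 0 * (μ K₂).toReal * ‖x‖ with hB
    have hB0 : 0 ≤ B := by positivity
    set ε' : ℝ := ε / (2 * (B + 1)) with hε'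
    have hε'0 : 0 < ε' := by positivity
    obtain ⟨U, hUo, hU1, hU⟩ := aux_unif_left f hf hfc hε'0
    have hev2 : {t : G | t⁻¹ * t₀ ∈ U} ∈ 𝓝 t₀ := by
      have hcm : Continuous fun t : G => t⁻¹ * t₀ := continuous_inv.mul continuous_const
      exact hcm.continuousAt.preimage_mem_nhds (hUo.mem_nhds (by simpa using hU1))
    filter_upwards [interior_mem_nhds.2 hQn, hev2] with t htQ htU
    have ht₀Q : t₀ ∈ Q := mem_of_mem_nhds hQn
    have hconth : Continuous (tr t f - tr t₀ f) := (tr_continuous t hf).sub (tr_continuous t₀ hf)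
    have hsupph : tsupport (tr t f - tr t₀ f) ⊆ K₂ := by
      refine subset_trans (closure_mono ?_) (by rw [hK₂])
      refine subset_trans (Function.support_sub _ _) ?_
      apply Set.union_subset
      · rw [support_tr]
        rintro - ⟨s, hs, rfl⟩
        exact ⟨t, interior_subset htQ, s, subset_tsupport _ hs, rfl⟩
      · rw [support_tr]
        rintro - ⟨s, hs, rfl⟩
        exact ⟨t₀, ht₀Q, s, subset_tsupport _ hs, rfl⟩
    have hbd : ∀ s, ‖(tr t f - tr t₀ f) s‖ ≤ ε' := by
      intro s
      have harg : (tr t f - tr t₀ f) s = f ((t⁻¹ * t₀) * (t₀⁻¹ * s)) - f (t₀⁻¹ * s) := by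
        show f (t⁻¹ * s) - f (t₀⁻¹ * s) = _
        congr 2
        group
      rw [harg]
      exact hU _ htU _
    have hL1 : ∫ s, ‖(tr t f - tr t₀ f) s‖ ∂μ ≤ ε' * (μ K₂).toReal :=
      aux_L1_bound μ hconth hK₂c hsupph hbd
    rw [dist_eq_norm]
    have hdiff : Ψ (tr t f) x - Ψ (tr t₀ f) x = Ψ (tr t f - tr t₀ f) x := by
      rw [hΨsub (tr t f) (tr t₀ f) (tr_continuous t hf) (tr_hcs t hfc)
        (tr_continuous t₀ hf) (tr_hcs t₀ hfc)]
      rfl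
    rw [hdiff]
    calc ‖Ψ (tr t f - tr t₀ f) x‖
        ≤ ‖Ψ (tr t f - tr t₀ f)‖ * ‖x‖ := ContinuousLinearMap.le_opNorm _ _
      _ ≤ (max C 0 * (ε' * (μ K₂).toReal)) * ‖x‖ := by
          refine mul_le_mul_of_nonneg_right ?_ (norm_nonneg _)
          refine le_trans (hC _ hconth hsupph) ?_
          refine le_trans (mul_le_mul_of_nonneg_right (le_max_left C 0)
            (integral_nonneg fun s => norm_nonneg _)) ?_
          exact mul_le_mul_of_nonneg_left hL1 (le_max_right C 0)
      _ = B * ε' := by rw [hB]; ring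
      _ ≤ (B + 1) * ε' := by nlinarith
      _ = ε / 2 := by rw [hε']; field_simp
      _ < ε := by linarith
  -- continuity on D
  have hcontD : ∀ y ∈ D, Continuous fun t : G => π t y := by
    intro y hy
    induction hy using Submodule.span_induction with
    | mem y hy =>
        obtain ⟨f, x, hfco, hfc, rfl⟩ := hy
        exact (hgen f hfco hfc x).congr fun t => (hπval t f hfco hfc x).symm
    | zero => exact continuous_const.congr fun t => (map_zero (π t)).symm
    | add y z hy hz ihy ihz =>
        exact (ihy.add ihz).congr fun t => (map_add (π t) y z).symm
    | smul c y hy ihy =>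
        exact (ihy.const_smul c).congr fun t => (map_smul (π t) c y).symm
  -- continuity everywhere
  have hcont : ∀ x : E, Continuous fun t : G => π t x := by
    intro x
    rw [continuous_iff_continuousAt]
    intro t₀
    rw [ContinuousAt, Metric.tendsto_nhds]
    intro ε hε
    obtain ⟨Q, hQc, hQn⟩ := exists_compact_mem_nhds t₀
    obtain ⟨C, hC0, hC⟩ := hπbound Q hQc
    obtain ⟨y, hyD, hxy⟩ := hnd.exists_dist_lt x (show (0:ℝ) < ε / (4 * (C + 1)) by positivity)
    have hcy := (hcontD y hyD).continuousAt (x := t₀)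
    rw [ContinuousAt, Metric.tendsto_nhds] at hcy
    filter_upwards [interior_mem_nhds.2 hQn, hcy (ε / 4) (by positivity)] with t htQ hty
    have ht₀Q : t₀ ∈ Q := mem_of_mem_nhds hQn
    have hb1 : ‖π t x - π t y‖ ≤ C * ‖x - y‖ := by
      rw [← map_sub]
      exact hC t (interior_subset htQ) (x - y)
    have hb2 : ‖π t₀ y - π t₀ x‖ ≤ C * ‖x - y‖ := by
      rw [← map_sub]
      calc ‖π t₀ (y - x)‖ ≤ C * ‖y - x‖ := hC t₀ ht₀Q (y - x)
        _ = C * ‖x - y‖ := by rw [norm_sub_rev]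
    have hxy2 : ‖x - y‖ < ε / (4 * (C + 1)) := by rwa [← dist_eq_norm]
    have hxy' : C * ‖x - y‖ ≤ ε / 4 := by
      have h1 : C * ‖x - y‖ ≤ (C + 1) * (ε / (4 * (C + 1))) := by
        have h2 : 0 ≤ ε / (4 * (C + 1)) := by positivity
        nlinarith [norm_nonneg (x - y)]
      have h3 : (C + 1) * (ε / (4 * (C + 1))) = ε / 4 := by field_simp
      linarith
    have hty' : ‖π t y - π t₀ y‖ < ε / 4 := by rwa [← dist_eq_norm]
    have hsplit : π t x - π t₀ x
        = (π t x - π t y) + ((π t y - π t₀ y) + (π t₀ y - π t₀ x)) := by abel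
    rw [dist_eq_norm, hsplit]
    refine lt_of_le_of_lt (norm_add_le _ _) ?_
    refine lt_of_le_of_lt (add_le_add_right (norm_add_le _ _) _) ?_
    linarith
    -- the integral representation on generators (vector-valued integral argument)
  have hP4gen : ∀ (f g : G → ℂ), Continuous f → HasCompactSupport f →
      Continuous g → HasCompactSupport g → ∀ y : E,
      Ψ (cv μ f g) y = ∫ t, f t • Ψ (tr t g) y ∂μ := by
    intro f g hf hfc hg hgc y
    set K' : Set G := tsupport f * tsupport g with hK'
    have hK'c : IsCompact K' := hfc.mul hgc
    obtain ⟨χ, hχ1, -, hχc, hχI⟩ :=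
      exists_continuous_one_zero_of_isCompact hK'c isClosed_empty (Set.disjoint_empty K')
    set χc : G → ℂ := fun s => ((χ s : ℝ) : ℂ) with hχcdef
    have hχcc : Continuous χc := Complex.continuous_ofReal.comp χ.continuous
    have hχccs : HasCompactSupport χc :=
      hχc.comp_left (g := Complex.ofReal) Complex.ofReal_zero
    have hχnorm : ∀ s, ‖χc s‖ ≤ 1 := by
      intro s
      rw [show χc s = ((χ s : ℝ) : ℂ) from rfl, Complex.norm_real,
        Real.norm_of_nonneg (hχI s).1]
      exact (hχI s).2
    have hχone : ∀ s ∈ K', χc s = 1 := by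
      intro s hs
      rw [show χc s = ((χ s : ℝ) : ℂ) from rfl, show χ s = 1 from hχ1 hs]
      norm_num
    set Kχ : Set G := tsupport χc with hKχ
    have hKχc : IsCompact Kχ := hχccs
    obtain ⟨Cχ, hCχ⟩ := hlb Kχ hKχc
    -- supremum bound for g
    obtain ⟨Mg, hMg⟩ := (hgc.isCompact_range hg).isBounded.exists_norm_le
    have hMgb : ∀ s, ‖g s‖ ≤ Mg := fun s => hMg _ (Set.mem_range_self s)
    -- the bounded continuous functions `τb t`
    let τb : G → (G →ᵇ ℂ) := fun t =>
      BoundedContinuousFunction.ofNormedAddCommGroup (tr t g) (tr_continuous t hg)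
        Mg (fun s => hMgb (t⁻¹ * s))
    have hτb_apply : ∀ t s, τb t s = g (t⁻¹ * s) := fun t s => rfl
    have hτbc : Continuous τb := by
      rw [continuous_iff_continuousAt]
      intro t₀
      rw [ContinuousAt, Metric.tendsto_nhds]
      intro ε hε
      obtain ⟨U, hUo, hU1, hU⟩ := aux_unif_left g hg hgc (half_pos hε)
      have hev2 : {t : G | t⁻¹ * t₀ ∈ U} ∈ 𝓝 t₀ := by
        have hcm : Continuous fun t : G => t⁻¹ * t₀ := continuous_inv.mul continuous_const
        exact hcm.continuousAt.preimage_mem_nhds (hUo.mem_nhds (by simpa using hU1))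
      filter_upwards [hev2] with t htU
      refine lt_of_le_of_lt ((BoundedContinuousFunction.dist_le (half_pos hε).le).2 ?_)
        (half_lt_self hε)
      intro s
      rw [dist_eq_norm]
      have harg : τb t s - τb t₀ s = g ((t⁻¹ * t₀) * (t₀⁻¹ * s)) - g (t₀⁻¹ * s) := by
        rw [hτb_apply, hτb_apply]
        congr 2
        group
      rw [harg]
      exact hU _ htU _
    -- the continuous linear map Φ
    have hmulcc : ∀ h : G → ℂ, Continuous h → Continuous fun s => χc s * h s :=
      fun h hh => hχcc.mul hh
    have hmulcs : ∀ h : G → ℂ, HasCompactSupport fun s => χc s * h s := by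
      intro h
      refine hχccs.mono ?_
      intro s hs h0
      exact hs (by simp [mem_support, h0])
    have hmulsupp : ∀ h : G → ℂ, tsupport (fun s => χc s * h s) ⊆ Kχ := by
      intro h
      refine closure_mono ?_
      intro s hs h0
      exact hs (by simp [mem_support, h0])
    let Φlin : (G →ᵇ ℂ) →ₗ[ℂ] E :=
      { toFun := fun h => Ψ (fun s => χc s * h s) y
        map_add' := by
          intro h₁ h₂
          show Ψ (fun s => χc s * (h₁ + h₂) s) y
            = Ψ (fun s => χc s * h₁ s) y + Ψ (fun s => χc s * h₂ s) y
          have heq : (fun s => χc s * (h₁ + h₂) s)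
              = (fun s => χc s * h₁ s) + (fun s => χc s * h₂ s) := by
            funext s
            simp [mul_add]
          rw [heq, hadd _ _ (hmulcc _ h₁.continuous) (hmulcs _)
            (hmulcc _ h₂.continuous) (hmulcs _)]
          rfl
        map_smul' := by
          intro c h
          show Ψ (fun s => χc s * (c • h) s) y = c • Ψ (fun s => χc s * h s) y
          have heq : (fun s => χc s * (c • h) s) = c • (fun s => χc s * h s) := by
            funext s
            simp only [BoundedContinuousFunction.coe_smul, Pi.smul_apply, smul_eq_mul]
            ring
          rw [heq, hsmul c _ (hmulcc _ h.continuous) (hmulcs _)]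
          rfl }
    have hΦbound : ∀ h : G →ᵇ ℂ,
        ‖Φlin h‖ ≤ (max Cχ 0 * (μ Kχ).toReal * ‖y‖) * ‖h‖ := by
      intro h
      have hL1 : ∫ s, ‖χc s * h s‖ ∂μ ≤ ‖h‖ * (μ Kχ).toReal := by
        refine aux_L1_bound μ (hmulcc _ h.continuous) hKχc (hmulsupp _) ?_
        intro s
        rw [norm_mul]
        calc ‖χc s‖ * ‖h s‖ ≤ 1 * ‖h‖ :=
              mul_le_mul (hχnorm s) (h.norm_coe_le_norm s) (norm_nonneg _) one_pos.le
          _ = ‖h‖ := one_mul _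
      calc ‖Φlin h‖ = ‖Ψ (fun s => χc s * h s) y‖ := rfl
        _ ≤ ‖Ψ (fun s => χc s * h s)‖ * ‖y‖ := ContinuousLinearMap.le_opNorm _ _
        _ ≤ (max Cχ 0 * (‖h‖ * (μ Kχ).toReal)) * ‖y‖ := by
            refine mul_le_mul_of_nonneg_right ?_ (norm_nonneg _)
            refine le_trans (hCχ _ (hmulcc _ h.continuous) (hmulsupp _)) ?_
            refine le_trans (mul_le_mul_of_nonneg_right (le_max_left Cχ 0)
              (integral_nonneg fun s => norm_nonneg _)) ?_
            exact mul_le_mul_of_nonneg_left hL1 (le_max_right Cχ 0)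
        _ = (max Cχ 0 * (μ Kχ).toReal * ‖y‖) * ‖h‖ := by ring
    let Φ : (G →ᵇ ℂ) →L[ℂ] E := Φlin.mkContinuous _ hΦbound
    -- the integrand
    let ξ : G → (G →ᵇ ℂ) := fun t => f t • τb t
    have hξapply : ∀ t s, ξ t s = f t * g (t⁻¹ * s) := fun t s => rfl
    have hξc : Continuous ξ := hf.smul hτbc
    have hξcs : HasCompactSupport ξ := by
      refine hfc.mono ?_
      intro t ht h0
      refine ht ?_
      show f t • τb t = 0
      rw [h0, zero_smul]
    have hξint : Integrable ξ μ := hξc.integrable_of_hasCompactSupport hξcs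
    -- evaluate Φ on ξ t
    have hstepB : ∀ t, Φ (ξ t) = f t • Ψ (tr t g) y := by
      intro t
      have h1 : Φ (ξ t) = Ψ (fun s => χc s * (f t * g (t⁻¹ * s))) y := rfl
      have h2 : (fun s => χc s * (f t * g (t⁻¹ * s))) = f t • (fun s => χc s * tr t g s) := by
        funext s
        show _ = f t * (χc s * g (t⁻¹ * s))
        ring
      rw [h1, h2, hsmul (f t) _ (hmulcc _ (tr_continuous t hg)) (hmulcs _)]
      simp only [ContinuousLinearMap.smul_apply]
      by_cases hft : t ∈ tsupport f
      · have heq2 : (fun s => χc s * tr t g s) = tr t g := by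
          funext s
          by_cases hgs : tr t g s = 0
          · rw [hgs, mul_zero]
          · have hsK : s ∈ K' := by
              have hmem : t⁻¹ * s ∈ support g := mem_support.2 hgs
              exact ⟨t, hft, t⁻¹ * s, subset_tsupport g hmem, by group⟩
            rw [hχone s hsK, one_mul]
        rw [heq2]
      · have hft0 : f t = 0 := image_eq_zero_of_notMem_tsupport hft
        rw [hft0, zero_smul, zero_smul]
    -- evaluate the integral of ξ
    have hwcv : ∀ s, (∫ t, ξ t ∂μ) s = cv μ f g s := by
      intro s
      have hcomm := (BoundedContinuousFunction.evalCLM (𝕜 := ℂ) s).integral_comp_comm hξint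
      calc (∫ t, ξ t ∂μ) s
          = (BoundedContinuousFunction.evalCLM (𝕜 := ℂ) s) (∫ t, ξ t ∂μ) := rfl
        _ = ∫ t, (BoundedContinuousFunction.evalCLM (𝕜 := ℂ) s) (ξ t) ∂μ := hcomm.symm
        _ = ∫ t, f t * g (t⁻¹ * s) ∂μ := by
            congr 1
        _ = cv μ f g s := rfl
    have hstepC : (fun s => χc s * (∫ t, ξ t ∂μ) s) = cv μ f g := by
      funext s
      rw [hwcv s]
      by_cases hcv : cv μ f g s = 0
      · rw [hcv, mul_zero]
      · have hsK : s ∈ K' :=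
          Set.mul_subset_mul (subset_tsupport f) (subset_tsupport g)
            (support_cv μ (mem_support.2 hcv))
        rw [hχone s hsK, one_mul]
    calc Ψ (cv μ f g) y = Φ (∫ t, ξ t ∂μ) := by rw [← hstepC]; rfl
      _ = ∫ t, Φ (ξ t) ∂μ := (Φ.integral_comp_comm hξint).symm
      _ = ∫ t, f t • Ψ (tr t g) y ∂μ := by
          congr 1
          funext t
          rw [hstepB t]
  -- the integral representation everywhere
  have hP4 : ∀ (f : G → ℂ), Continuous f → HasCompactSupport f → ∀ x : E,
      Ψ f x = ∫ t, f t • π t x ∂μ := by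
    intro f hf hfc
    have hint : ∀ x : E, Integrable (fun t => f t • π t x) μ := by
      intro x
      refine (hf.smul (hcont x)).integrable_of_hasCompactSupport ?_
      refine hfc.mono ?_
      intro t ht h0
      exact ht (by simp [mem_support, h0])
    obtain ⟨Cf, hCf0, hCf⟩ := hπbound (tsupport f) hfc
    obtain ⟨Mf, hMf⟩ := (hfc.isCompact_range hf).isBounded.exists_norm_le
    have hMfb : ∀ t, ‖f t‖ ≤ Mf := fun t => hMf _ (Set.mem_range_self t)
    have hMf0 : 0 ≤ Mf := le_trans (norm_nonneg _) (hMfb 1)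
    let Rlin : E →ₗ[ℂ] E :=
      { toFun := fun x => ∫ t, f t • π t x ∂μ
        map_add' := by
          intro x z
          show ∫ t, f t • π t (x + z) ∂μ = (∫ t, f t • π t x ∂μ) + ∫ t, f t • π t z ∂μ
          rw [← integral_add (hint x) (hint z)]
          congr 1
          funext t
          rw [map_add, smul_add]
        map_smul' := by
          intro c x
          show ∫ t, f t • π t (c • x) ∂μ = c • ∫ t, f t • π t x ∂μ
          rw [← integral_smul]
          congr 1
          funext t
          rw [_root_.map_smul, smul_comm] }
    have hRbound : ∀ x : E, ‖Rlin x‖ ≤ (Mf * (Cf * (μ (tsupport f)).toReal)) * ‖x‖ := by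
      intro x
      have h0 : ∀ t, t ∉ tsupport f → f t • π t x = 0 := fun t ht => by
        rw [image_eq_zero_of_notMem_tsupport ht, zero_smul]
      calc ‖Rlin x‖ = ‖∫ t in tsupport f, f t • π t x ∂μ‖ := by
            rw [show Rlin x = ∫ t, f t • π t x ∂μ from rfl,
              ← setIntegral_eq_integral_of_forall_compl_eq_zero h0]
        _ ≤ (Mf * (Cf * ‖x‖)) * (μ (tsupport f)).toReal := by
            apply norm_setIntegral_le_of_norm_le_const hfc.measure_lt_top
            intro t ht
            rw [norm_smul]
            exact mul_le_mul (hMfb t) (hCf t ht x) (norm_nonneg _) hMf0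
        _ = (Mf * (Cf * (μ (tsupport f)).toReal)) * ‖x‖ := by ring
    let R : E →L[ℂ] E := Rlin.mkContinuous _ hRbound
    have hΨR : Ψ f = R := by
      refine ContinuousLinearMap.ext_on hnd' ?_
      rintro y ⟨g, x, hgco, hgc, rfl⟩
      show Ψ f (Ψ g x) = ∫ t, f t • π t (Ψ g x) ∂μ
      have h1 : Ψ f (Ψ g x) = Ψ (cv μ f g) x := by
        have h2 : Ψ (cv μ f g) = (Ψ f).comp (Ψ g) := hmul f g hf hfc hgco hgc
        exact (DFunLike.congr_fun h2 x).symm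
      rw [h1, hP4gen f g hf hfc hgco hgc x]
      congr 1
      funext t
      rw [hπval t g hgco hgc x]
    intro x
    exact DFunLike.congr_fun hΨR x
  -- conclusion
  refine ⟨π, ⟨hπmul, hπone, hcont, hP4⟩, ?_⟩
  intro π' hπ'
  obtain ⟨h'mul, h'one, h'cont, h'int⟩ := hπ'
  funext t
  refine ContinuousLinearMap.ext_on hnd' ?_
  rintro y ⟨g, x, hgco, hgc, rfl⟩
  show π' t (Ψ g x) = π t (Ψ g x)
  rw [hπval t g hgco hgc x]
  have hint' : Integrable (fun s => g s • π' s x) μ := by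
    refine (hgco.smul (h'cont x)).integrable_of_hasCompactSupport ?_
    refine hgc.mono ?_
    intro s hs h0
    exact hs (by simp [mem_support, h0])
  calc π' t (Ψ g x) = π' t (∫ s, g s • π' s x ∂μ) := by rw [← h'int g hgco hgc x]
    _ = ∫ s, π' t (g s • π' s x) ∂μ := ((π' t).integral_comp_comm hint').symm
    _ = ∫ s, tr t g s • π' s x ∂μ := by
        rw [← integral_mul_left_eq_self (fun s => tr t g s • π' s x) t]
        congr 1
        funext s
        rw [_root_.map_smul]
        congr 1
        · show g s = g (t⁻¹ * (t * s))
          rw [inv_mul_cancel_left]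
        · show π' t (π' s x) = π' (t * s) x
          rw [h'mul t s]
          rfl
    _ = Ψ (tr t g) x := (h'int (tr t g) (tr_continuous t hgco) (tr_hcs t hgc) x).symm
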